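/- arXiv:1709.07317 — 6 statements merged into one kernel-verified Lean document; each statement's English description precedes it below -/
import Mathlib

section
/- For a lattice Γ ⊆ ℝ^d, the set OS(Γ) = {R ∈ O(d,ℝ) : ∃ α > 0 with αRΓ ⊆ Γ} of similarity isometries is a subgroup of O(d,ℝ). -/
noncomputable section

abbrev Euc (d : ℕ) : Type := EuclideanSpace ℝ (Fin d)

/-- Γ is a (full-rank) lattice in ℝ^d: the ℤ-span of an ℝ-basis of ℝ^d. -/
def IsLattice {d : ℕ} (Γ : AddSubgroup (Euc d)) : Prop :=
  ∃ b : Module.Basis (Fin d) ℝ (Euc d),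
    Γ = (Submodule.span ℤ (Set.range ⇑b)).toAddSubgroup

/-- Two subgroups are commensurate if their intersection has finite index in both. -/
def Commensurate {d : ℕ} (Γ₁ Γ₂ : AddSubgroup (Euc d)) : Prop :=
  ((Γ₁ ⊓ Γ₂).addSubgroupOf Γ₁).FiniteIndex ∧ ((Γ₁ ⊓ Γ₂).addSubgroupOf Γ₂).FiniteIndex

/-- The image α·R(Γ) of Γ under the similarity transformation αR. -/
def simMap {d : ℕ} (α : ℝ) (R : Euc d ≃ₗᵢ[ℝ] Euc d) (Γ : AddSubgroup (Euc d)) :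
    AddSubgroup (Euc d) :=
  Γ.map (α • R.toLinearEquiv.toLinearMap).toAddMonoidHom

/-- The image R(Γ). -/
def rotMap {d : ℕ} (R : Euc d ≃ₗᵢ[ℝ] Euc d) (Γ : AddSubgroup (Euc d)) :
    AddSubgroup (Euc d) :=
  Γ.map R.toLinearEquiv.toLinearMap.toAddMonoidHom

/-- The set of similarity isometries of Γ. -/
def OSset {d : ℕ} (Γ : AddSubgroup (Euc d)) : Set (Euc d ≃ₗᵢ[ℝ] Euc d) :=
  {R | ∃ α : ℝ, 0 < α ∧ simMap α R Γ ≤ Γ}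

/-- The set of scaling factors of R, Scal_Γ(R) = {α : αRΓ ⊆ Γ}. -/
def Scal {d : ℕ} (Γ : AddSubgroup (Euc d)) (R : Euc d ≃ₗᵢ[ℝ] Euc d) : Set ℝ :=
  {α | simMap α R Γ ≤ Γ}

/-- δ is the denominator of R: the smallest positive element of Scal Γ R. -/
def IsDen {d : ℕ} (Γ : AddSubgroup (Euc d)) (R : Euc d ≃ₗᵢ[ℝ] Euc d) (δ : ℝ) : Prop :=
  0 < δ ∧ δ ∈ Scal Γ R ∧ ∀ β : ℝ, 0 < β → β ∈ Scal Γ R → δ ≤ β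

/-- The set of coincidence isometries of Γ. -/
def OCset {d : ℕ} (Γ : AddSubgroup (Euc d)) : Set (Euc d ≃ₗᵢ[ℝ] Euc d) :=
  {R | Commensurate Γ (rotMap R Γ)}

/-- The coincidence index Σ_Γ(R) = [Γ : Γ ∩ RΓ]. -/
def coinIndex {d : ℕ} (Γ : AddSubgroup (Euc d)) (R : Euc d ≃ₗᵢ[ℝ] Euc d) : ℕ :=
  (rotMap R Γ).relIndex Γ

/-- The coincidence site lattice Γ(R) = Γ ∩ RΓ. -/
def CSL {d : ℕ} (Γ : AddSubgroup (Euc d)) (R : Euc d ≃ₗᵢ[ℝ] Euc d) :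
    AddSubgroup (Euc d) :=
  Γ ⊓ rotMap R Γ

/-- The dual lattice Γ* = {x : ⟨x,y⟩ ∈ ℤ for all y ∈ Γ}. -/
def dualLattice {d : ℕ} (Γ : AddSubgroup (Euc d)) : AddSubgroup (Euc d) where
  carrier := {x | ∀ y ∈ Γ, ∃ n : ℤ, (inner ℝ x y : ℝ) = (n : ℝ)}
  zero_mem' := by
    intro y hy
    exact ⟨0, by simp⟩
  add_mem' := by
    intro a b ha hb y hy
    obtain ⟨n, hn⟩ := ha y hy
    obtain ⟨m, hm⟩ := hb y hy
    exact ⟨n + m, by rw [inner_add_left, hn, hm]; push_cast; ring⟩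
  neg_mem' := by
    intro a ha y hy
    obtain ⟨n, hn⟩ := ha y hy
    exact ⟨-n, by rw [inner_neg_left, hn]; push_cast; ring⟩


lemma simMap_le_iff {d : ℕ} (α : ℝ) (R : Euc d ≃ₗᵢ[ℝ] Euc d) (Γ : AddSubgroup (Euc d)) :
    simMap α R Γ ≤ Γ ↔ ∀ x ∈ Γ, α • R x ∈ Γ := by
  constructor
  · intro h x hx
    exact h ⟨x, hx, rfl⟩
  · rintro h _ ⟨x, hx, rfl⟩
    exact h x hx

lemma inv_mem_aux {d : ℕ} (Γ : AddSubgroup (Euc d)) (hΓ : IsLattice Γ)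
    {R : Euc d ≃ₗᵢ[ℝ] Euc d} {α : ℝ} (hα : 0 < α) (h : simMap α R Γ ≤ Γ) :
    ∃ β : ℝ, 0 < β ∧ simMap β R⁻¹ Γ ≤ Γ := by
  obtain ⟨b, rfl⟩ := hΓ
  rw [simMap_le_iff] at h
  simp only [Submodule.mem_toAddSubgroup] at h
  -- the linear map f = α • R
  set f : Euc d →ₗ[ℝ] Euc d := α • R.toLinearEquiv.toLinearMap with hf
  have hfapp : ∀ x, f x = α • R x := fun x => rfl
  -- integer matrix of f in basis b
  have hAex : ∀ i j, ∃ z : ℤ, (algebraMap ℤ ℝ) z = b.repr (f (b j)) i := by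
    intro i j
    exact (b.mem_span_iff_repr_mem ℤ _).mp (h _ (Submodule.subset_span ⟨j, rfl⟩)) i
  choose A0 hA using hAex
  set A : Matrix (Fin d) (Fin d) ℤ := Matrix.of A0 with hA0
  -- f's matrix is A
  have hmat : LinearMap.toMatrix b b f = (A.map (Int.cast : ℤ → ℝ)) := by
    ext i j
    rw [LinearMap.toMatrix_apply, Matrix.map_apply, ← hA i j]
    rfl
  -- f is invertible, so det A ≠ 0
  have hdet : A.det ≠ 0 := by
    set e : Euc d ≃ₗ[ℝ] Euc d :=
      R.toLinearEquiv.trans (LinearEquiv.smulOfNeZero ℝ (Euc d) α hα.ne')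
    have he : e.toLinearMap = f := rfl
    have h1 : IsUnit (LinearMap.det e.toLinearMap) := e.isUnit_det'
    rw [he, ← LinearMap.det_toMatrix b, hmat] at h1
    have h2 : (Int.castRingHom ℝ) A.det ≠ 0 := by
      rw [RingHom.map_det]
      exact h1.ne_zero
    rw [eq_intCast] at h2
    exact_mod_cast h2
  set n : ℤ := A.det with hn
  -- key: n • x ∈ f '' Γ for x ∈ Γ
  set M : Submodule ℤ (Euc d) :=
    (Submodule.span ℤ (Set.range ⇑b)).map (f.restrictScalars ℤ) with hM
  have key : ∀ x ∈ Submodule.span ℤ (Set.range ⇑b), n • x ∈ M := by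
    have hbk : ∀ k, n • b k ∈ M := by
      intro k
      have step : (n : ℝ) • b k = ∑ j, ((A.adjugate) j k : ℝ) • f (b j) := by
        have hfb : ∀ j, f (b j) = ∑ i, ((A i j : ℝ)) • b i := by
          intro j
          conv_lhs => rw [← b.sum_repr (f (b j))]
          refine Finset.sum_congr rfl fun i _ => ?_
          rw [← hA i j]; rfl
        simp_rw [hfb, Finset.smul_sum, smul_smul]
        rw [Finset.sum_comm]
        have : ∀ i, (∑ j, ((A.adjugate j k : ℝ)) * (A i j : ℝ)) • b i
            = (((A * A.adjugate) i k : ℤ) : ℝ) • b i := by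
          intro i
          congr 1
          rw [Matrix.mul_apply]
          push_cast
          exact Finset.sum_congr rfl fun j _ => mul_comm _ _
        simp_rw [← Finset.sum_smul, this, Matrix.mul_adjugate]
        simp [Matrix.one_apply, ← hn]
      have : n • b k = ∑ j, (A.adjugate j k) • f (b j) := by
        rw [← Int.cast_smul_eq_zsmul ℝ, step]
        exact Finset.sum_congr rfl fun j _ => Int.cast_smul_eq_zsmul ℝ _ _
      rw [this]
      exact Submodule.sum_mem _ fun j _ => Submodule.smul_mem _ _
        ⟨b j, Submodule.subset_span ⟨j, rfl⟩, rfl⟩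
    intro x hx
    have : Submodule.span ℤ (Set.range ⇑b) ≤ Submodule.comap (n • (LinearMap.id : Euc d →ₗ[ℤ] Euc d)) M := by
      rw [Submodule.span_le]
      rintro _ ⟨k, rfl⟩
      simpa using hbk k
    simpa using this hx
  -- conclude: β = |n| / α
  have hn0 : ((n : ℝ)) ≠ 0 := Int.cast_ne_zero.mpr hdet
  refine ⟨|(n : ℝ)| / α, div_pos (abs_pos.mpr hn0) hα, ?_⟩
  rw [simMap_le_iff]
  intro x hx
  simp only [Submodule.mem_toAddSubgroup] at hx ⊢
  obtain ⟨y, hy, hyx⟩ := key x hx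
  have hyx' : α • R y = (n : ℝ) • x := by
    rw [← Int.cast_smul_eq_zsmul ℝ] at hyx
    exact hyx
  have happ : ((n : ℝ) / α) • (R⁻¹ : Euc d ≃ₗᵢ[ℝ] Euc d) x = y := by
    have := congrArg (fun z => (R⁻¹ : Euc d ≃ₗᵢ[ℝ] Euc d) z) hyx'
    simp only [map_smul] at this
    have hR : (R⁻¹ : Euc d ≃ₗᵢ[ℝ] Euc d) (R y) = y := R.symm_apply_apply y
    rw [hR] at this
    rw [div_eq_mul_inv, mul_comm, mul_smul, ← this, inv_smul_smul₀ hα.ne']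
  rcases abs_choice ((n : ℝ)) with habs | habs
  · rw [habs, happ]; exact hy
  · rw [habs, neg_div, neg_smul, happ]
    exact Submodule.neg_mem _ hy

theorem OSset_isSubgroup {d : ℕ} (Γ : AddSubgroup (Euc d)) (hΓ : IsLattice Γ) :
    ∃ H : Subgroup (Euc d ≃ₗᵢ[ℝ] Euc d), (H : Set (Euc d ≃ₗᵢ[ℝ] Euc d)) = OSset Γ := by
  classical
  refine ⟨{ carrier := OSset Γ, one_mem' := ?one, mul_mem' := ?mul, inv_mem' := ?inv }, rfl⟩
  case one =>
    refine ⟨1, one_pos, (simMap_le_iff _ _ _).mpr fun x hx => ?_⟩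
    simpa using hx
  case mul =>
    rintro R S ⟨α, hα, hR⟩ ⟨β, hβ, hS⟩
    refine ⟨α * β, mul_pos hα hβ, (simMap_le_iff _ _ _).mpr fun x hx => ?_⟩
    rw [simMap_le_iff] at hR hS
    have : (α * β) • (R * S) x = α • R (β • S x) := by
      simp [mul_smul, LinearIsometryEquiv.map_smul]
    rw [this]
    exact hR _ (hS _ hx)
  case inv =>
    rintro R ⟨α, hα, hR⟩
    obtain ⟨β, hβ, h⟩ := inv_mem_aux Γ hΓ hα hR
    exact ⟨β, hβ, h⟩
end
end

section
/- Let Γ ⊆ ℝ^d be a lattice and R ∈ OS(Γ). Then den_Γ(R)^{d-1} is a positive integer multiple of den_Γ(R⁻¹); in particular den_Γ(R⁻¹) ≤ den_Γ(R)^{d-1}. -/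
noncomputable section

open Matrix

lemma mem_scal_iff {d : ℕ} (Γ : AddSubgroup (Euc d)) (R : Euc d ≃ₗᵢ[ℝ] Euc d) (α : ℝ) :
    α ∈ Scal Γ R ↔ ∀ x ∈ Γ, α • R x ∈ Γ := by
  constructor
  · intro h x hx
    exact h ⟨x, hx, rfl⟩
  · rintro h y ⟨x, hx, rfl⟩
    exact h x hx

lemma scal_sub_mem {d : ℕ} {Γ : AddSubgroup (Euc d)} {R : Euc d ≃ₗᵢ[ℝ] Euc d} {α β : ℝ}
    (hα : α ∈ Scal Γ R) (hβ : β ∈ Scal Γ R) : α - β ∈ Scal Γ R := by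
  rw [mem_scal_iff] at *
  intro x hx
  rw [sub_smul]
  exact Γ.sub_mem (hα x hx) (hβ x hx)

lemma scal_zsmul_mem {d : ℕ} {Γ : AddSubgroup (Euc d)} {R : Euc d ≃ₗᵢ[ℝ] Euc d} {β : ℝ}
    (n : ℤ) (hβ : β ∈ Scal Γ R) : (n : ℝ) * β ∈ Scal Γ R := by
  rw [mem_scal_iff] at *
  intro x hx
  rw [mul_smul, Int.cast_smul_eq_zsmul]
  exact AddSubgroup.zsmul_mem Γ (hβ x hx) n

lemma abs_det_isometry {d : ℕ} (R : Euc d ≃ₗᵢ[ℝ] Euc d) :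
    |LinearMap.det (R.toLinearEquiv.toLinearMap)| = 1 := by
  let a := EuclideanSpace.basisFun (Fin d) ℝ
  have h := OrthonormalBasis.det_to_matrix_orthonormalBasis_real a (a.map R)
  have key : a.toBasis.det ⇑(a.map R) = LinearMap.det R.toLinearEquiv.toLinearMap := by
    have : ⇑(a.map R) = ⇑R.toLinearEquiv.toLinearMap ∘ ⇑a.toBasis := by
      ext i
      simp
    rw [this, Module.Basis.det_comp, Module.Basis.det_self, mul_one]
  rw [key] at h
  rcases h with h | h <;> rw [h] <;> norm_num

lemma pow_mem_scal_inv {d : ℕ} {Γ : AddSubgroup (Euc d)} (hΓ : IsLattice Γ)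
    {R : Euc d ≃ₗᵢ[ℝ] Euc d} {δ : ℝ} (hpos : 0 < δ) (hδ : δ ∈ Scal Γ R) :
    δ ^ (d - 1) ∈ Scal Γ R⁻¹ := by
  rw [mem_scal_iff]
  rcases Nat.eq_zero_or_pos d with hd | hd
  · subst hd
    intro x hx
    have : δ ^ (0 - 1) • R⁻¹ x = x := by
      exact Subsingleton.elim _ _
    rwa [this]
  obtain ⟨b, rfl⟩ := hΓ
  set T : Euc d →ₗ[ℝ] Euc d := δ • R.toLinearEquiv.toLinearMap with hT
  have hTmem : ∀ x ∈ Submodule.span ℤ (Set.range ⇑b), T x ∈ Submodule.span ℤ (Set.range ⇑b) := by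
    intro x hx
    have := hδ (show T x ∈ simMap δ R _ from ⟨x, hx, rfl⟩)
    exact this
  have hint : ∀ i j, ∃ m : ℤ, (m : ℝ) = LinearMap.toMatrix b b T i j := by
    intro i j
    have hbj : b j ∈ Submodule.span ℤ (Set.range ⇑b) := Submodule.subset_span ⟨j, rfl⟩
    obtain ⟨m, hm⟩ := (b.mem_span_iff_repr_mem ℤ _).mp (hTmem _ hbj) i
    exact ⟨m, by rw [LinearMap.toMatrix_apply, ← hm]; simp⟩
  choose M hM using hint
  set Mm : Matrix (Fin d) (Fin d) ℤ := Matrix.of M with hMm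
  have hmap : Mm.map (Int.cast : ℤ → ℝ) = LinearMap.toMatrix b b T := by
    ext i j
    exact hM i j
  set n : ℕ := Mm.det.natAbs with hn
  have hdetT : ((Mm.det : ℤ) : ℝ) = LinearMap.det T := by
    rw [← LinearMap.det_toMatrix b, ← hmap]
    have := RingHom.map_det (Int.castRingHom ℝ) Mm
    rw [RingHom.mapMatrix_apply] at this
    simpa using this
  have habs : ((n : ℤ) : ℝ) = δ ^ d := by
    have h1 : |LinearMap.det T| = δ ^ d := by
      rw [hT, LinearMap.det_smul, abs_mul, abs_pow, abs_det_isometry, mul_one,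
        finrank_euclideanSpace_fin, abs_of_pos hpos]
    rw [← h1, ← hdetT, ← Int.cast_abs]
    norm_cast
    exact (Int.abs_eq_natAbs _).symm
  set s : ℤ := if Mm.det < 0 then -1 else 1 with hs'
  have hs : s * Mm.det = (n : ℤ) := by
    rw [hs', hn]
    split_ifs with h
    · rw [neg_one_mul, ← Int.abs_eq_natAbs, abs_of_neg h]
    · rw [one_mul, ← Int.abs_eq_natAbs, abs_of_nonneg (not_lt.mp h)]
  have key : ∀ x ∈ Submodule.span ℤ (Set.range ⇑b), ∃ y ∈ Submodule.span ℤ (Set.range ⇑b),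
      T y = ((n : ℤ) : ℝ) • x := by
    intro x hx
    choose c hc using (b.mem_span_iff_repr_mem ℤ x).mp hx
    set k : Fin d → ℤ := s • (Mm.adjugate.mulVec c) with hk
    refine ⟨b.equivFun.symm (fun j => (k j : ℝ)), ?_, ?_⟩
    · rw [b.mem_span_iff_repr_mem ℤ]
      intro i
      refine ⟨k i, ?_⟩
      have : b.repr (b.equivFun.symm fun j => (k j : ℝ)) i
          = b.equivFun (b.equivFun.symm fun j => (k j : ℝ)) i := rfl
      rw [this, b.equivFun.apply_symm_apply]
      simp
    · apply b.equivFun.injective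
      have hrepr : ∀ z, b.equivFun z = ⇑(b.repr z) := fun z => rfl
      have h2 : ⇑(b.repr (b.equivFun.symm fun j => (k j : ℝ))) = fun j => (k j : ℝ) := by
        rw [← hrepr]
        exact b.equivFun.apply_symm_apply _
      have h3 := LinearMap.toMatrix_mulVec_repr b b T (b.equivFun.symm fun j => (k j : ℝ))
      have hMk : Mm *ᵥ k = (n : ℤ) • c := by
        rw [hk, Matrix.mulVec_smul, Matrix.mulVec_mulVec, Matrix.mul_adjugate,
          Matrix.smul_mulVec, Matrix.one_mulVec, smul_smul, hs]
      have h4 : (LinearMap.toMatrix b b T) *ᵥ (fun j => (k j : ℝ)) = fun i => ((n : ℤ) : ℝ) * (c i : ℝ) := by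
        rw [← hmap]
        funext i
        have := (RingHom.map_mulVec (Int.castRingHom ℝ) Mm k i).symm
        simp only [Int.coe_castRingHom] at this
        calc (Mm.map (Int.cast : ℤ → ℝ) *ᵥ fun j => (k j : ℝ)) i
            = (Mm.map (Int.cast : ℤ → ℝ) *ᵥ ((Int.cast : ℤ → ℝ) ∘ k)) i := rfl
          _ = ((Mm *ᵥ k) i : ℝ) := this
          _ = ((n : ℤ) : ℝ) * (c i : ℝ) := by rw [hMk]; push_cast; simp
      funext i
      rw [_root_.map_smul]
      show (b.repr (T _)) i = (((n : ℤ) : ℝ) • (b.equivFun x)) i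
      rw [← h3, h2, h4]
      have : b.equivFun x i = b.repr x i := rfl
      simp only [Pi.smul_apply, this, ← hc i, smul_eq_mul]
      simp [algebraMap_int_eq]
  intro x hx
  obtain ⟨y, hy, hTy⟩ := key x ((Submodule.mem_toAddSubgroup _).mp hx)
  have hpow : δ ^ d = δ * δ ^ (d - 1) := by
    rw [← pow_succ']
    congr 1
    omega
  have hRy : R y = δ ^ (d - 1) • x := by
    have : δ • R y = δ • (δ ^ (d - 1) • x) := by
      rw [smul_smul, ← hpow, ← habs]
      exact hTy
    exact smul_right_injective _ (ne_of_gt hpos) this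
  have hyx : δ ^ (d - 1) • R⁻¹ x = y := by
    have : R⁻¹ (R y) = y := by
      show R.symm (R y) = y
      exact R.symm_apply_apply y
    rw [← this, hRy]
    simp
  rw [hyx]
  exact (Submodule.mem_toAddSubgroup _).mpr hy

theorem den_inv_divides_den_pow {d : ℕ} (Γ : AddSubgroup (Euc d)) (hΓ : IsLattice Γ)
    (R : Euc d ≃ₗᵢ[ℝ] Euc d) (δ δ' : ℝ)
    (hδ : IsDen Γ R δ) (hδ' : IsDen Γ R⁻¹ δ') :
    (∃ n : ℕ, 0 < n ∧ δ ^ (d - 1) = (n : ℝ) * δ') ∧ δ' ≤ δ ^ (d - 1) := by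
  obtain ⟨hδpos, hδmem, -⟩ := hδ
  obtain ⟨hδ'pos, hδ'mem, hδ'min⟩ := hδ'
  have hα : δ ^ (d - 1) ∈ Scal Γ R⁻¹ := pow_mem_scal_inv hΓ hδpos hδmem
  have hαpos : 0 < δ ^ (d - 1) := pow_pos hδpos _
  refine ⟨?_, hδ'min _ hαpos hα⟩
  set m : ℤ := ⌊δ ^ (d - 1) / δ'⌋ with hm
  have hr : δ ^ (d - 1) - (m : ℝ) * δ' ∈ Scal Γ R⁻¹ :=
    scal_sub_mem hα (scal_zsmul_mem m hδ'mem)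
  have hfl := Int.floor_le (δ ^ (d - 1) / δ')
  have hfl2 := Int.lt_floor_add_one (δ ^ (d - 1) / δ')
  have hr0 : 0 ≤ δ ^ (d - 1) - (m : ℝ) * δ' := by
    rw [hm]
    have := mul_le_mul_of_nonneg_right hfl hδ'pos.le
    rw [div_mul_cancel₀ _ (ne_of_gt hδ'pos)] at this
    linarith
  have hrlt : δ ^ (d - 1) - (m : ℝ) * δ' < δ' := by
    rw [hm]
    have := mul_lt_mul_of_pos_right hfl2 hδ'pos
    rw [div_mul_cancel₀ _ (ne_of_gt hδ'pos)] at this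
    nlinarith
  have hzero : δ ^ (d - 1) = (m : ℝ) * δ' := by
    by_contra h
    have hpos' : 0 < δ ^ (d - 1) - (m : ℝ) * δ' :=
      lt_of_le_of_ne hr0 (fun hh => h (by linarith))
    have := hδ'min _ hpos' hr
    linarith
  have hmpos : 0 < m := by
    by_contra h
    push_neg at h
    have : (m : ℝ) ≤ 0 := by exact_mod_cast h
    nlinarith
  refine ⟨m.toNat, by omega, ?_⟩
  rw [hzero]
  congr 1
  rw [← Int.cast_natCast, Int.toNat_of_nonneg hmpos.le]
end
end

section
/- Let Γ ⊆ ℝ^d be a lattice. The set OC(Γ) = {R ∈ O(d,ℝ) : Γ and RΓ are commensurate} is a subgroup of O(d,ℝ). -/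
noncomputable section

lemma commensurate_iff {d : ℕ} (Γ₁ Γ₂ : AddSubgroup (Euc d)) :
    Commensurate Γ₁ Γ₂ ↔ Γ₂.relIndex Γ₁ ≠ 0 ∧ Γ₁.relIndex Γ₂ ≠ 0 := by
  unfold Commensurate
  rw [AddSubgroup.inf_addSubgroupOf_left, AddSubgroup.inf_addSubgroupOf_right]
  constructor
  · rintro ⟨h1, h2⟩; exact ⟨h1.index_ne_zero, h2.index_ne_zero⟩
  · rintro ⟨h1, h2⟩; exact ⟨⟨h1⟩, ⟨h2⟩⟩

lemma commensurate_symm {d : ℕ} {Γ₁ Γ₂ : AddSubgroup (Euc d)}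
    (h : Commensurate Γ₁ Γ₂) : Commensurate Γ₂ Γ₁ := by
  rw [commensurate_iff] at h ⊢; exact h.symm

lemma commensurate_trans {d : ℕ} {Γ₁ Γ₂ Γ₃ : AddSubgroup (Euc d)}
    (h : Commensurate Γ₁ Γ₂) (h' : Commensurate Γ₂ Γ₃) : Commensurate Γ₁ Γ₃ := by
  rw [commensurate_iff] at h h' ⊢
  exact ⟨AddSubgroup.relIndex_ne_zero_trans h'.1 h.1,
    AddSubgroup.relIndex_ne_zero_trans h.2 h'.2⟩

lemma mem_rotMap {d : ℕ} (R : Euc d ≃ₗᵢ[ℝ] Euc d) (Γ : AddSubgroup (Euc d)) (x : Euc d) :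
    x ∈ rotMap R Γ ↔ ∃ y ∈ Γ, R y = x := by
  simp [rotMap, AddSubgroup.mem_map]

lemma rotMap_one {d : ℕ} (Γ : AddSubgroup (Euc d)) : rotMap 1 Γ = Γ := by
  ext x
  simp [mem_rotMap]

lemma rotMap_mul {d : ℕ} (R S : Euc d ≃ₗᵢ[ℝ] Euc d) (Γ : AddSubgroup (Euc d)) :
    rotMap (R * S) Γ = rotMap R (rotMap S Γ) := by
  ext x
  simp only [mem_rotMap]
  constructor
  · rintro ⟨y, hy, rfl⟩; exact ⟨S y, ⟨y, hy, rfl⟩, rfl⟩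
  · rintro ⟨z, ⟨y, hy, rfl⟩, rfl⟩; exact ⟨y, hy, rfl⟩

lemma rotMap_inv_rotMap {d : ℕ} (R : Euc d ≃ₗᵢ[ℝ] Euc d) (Γ : AddSubgroup (Euc d)) :
    rotMap R⁻¹ (rotMap R Γ) = Γ := by
  rw [← rotMap_mul, inv_mul_cancel, rotMap_one]

lemma relindex_rotMap {d : ℕ} (R : Euc d ≃ₗᵢ[ℝ] Euc d) (A B : AddSubgroup (Euc d)) :
    (rotMap R A).relIndex (rotMap R B) = A.relIndex B := by
  have hinj : Function.Injective R.toLinearEquiv.toLinearMap.toAddMonoidHom :=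
    R.toLinearEquiv.injective
  have h := AddSubgroup.relIndex_comap (H := rotMap R A)
    (R.toLinearEquiv.toLinearMap.toAddMonoidHom) B
  rw [show AddSubgroup.comap R.toLinearEquiv.toLinearMap.toAddMonoidHom (rotMap R A) = A from
    AddSubgroup.comap_map_eq_self_of_injective hinj A] at h
  exact h.symm

lemma commensurate_rotMap {d : ℕ} (R : Euc d ≃ₗᵢ[ℝ] Euc d) {A B : AddSubgroup (Euc d)}
    (h : Commensurate A B) : Commensurate (rotMap R A) (rotMap R B) := by
  rw [commensurate_iff] at h ⊢
  rw [relindex_rotMap, relindex_rotMap]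
  exact h

theorem OCset_isSubgroup {d : ℕ} (Γ : AddSubgroup (Euc d)) (hΓ : IsLattice Γ) :
    ∃ H : Subgroup (Euc d ≃ₗᵢ[ℝ] Euc d), (H : Set (Euc d ≃ₗᵢ[ℝ] Euc d)) = OCset Γ := by
  refine ⟨{ carrier := OCset Γ, one_mem' := ?_, mul_mem' := ?_, inv_mem' := ?_ }, rfl⟩
  · intro R S hR hS
    show Commensurate Γ (rotMap (R * S) Γ)
    rw [rotMap_mul]
    exact commensurate_trans hR (commensurate_rotMap R hS)
  · show Commensurate Γ (rotMap 1 Γ)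
    rw [rotMap_one, commensurate_iff]
    simp [AddSubgroup.relIndex_self]
  · intro R hR
    show Commensurate Γ (rotMap R⁻¹ Γ)
    have := commensurate_rotMap R⁻¹ (hR : Commensurate Γ (rotMap R Γ))
    rw [rotMap_inv_rotMap] at this
    exact commensurate_symm this
end
end

section
/- For any lattice Γ ⊆ ℝ^d and R₁, R₂ ∈ OC(Γ): (1) Σ_Γ(R₁R₂) divides Σ_Γ(R₁)·Σ_Γ(R₂); (2) if Σ_Γ(R₁) and Σ_Γ(R₂) are coprime, then Σ_Γ(R₁R₂) = Σ_Γ(R₁)·Σ_Γ(R₂). -/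
noncomputable section

open MeasureTheory AddSubgroup Submodule

namespace CoinAux

variable {d : ℕ}

lemma relindex_dvd_relindex_of_le {G : Type*} [AddCommGroup G] (L A B : AddSubgroup G)
    (h : A ≤ B) : L.relIndex A ∣ L.relIndex B := by
  rw [← AddSubgroup.relIndex_addSubgroupOf h]
  exact AddSubgroup.relIndex_dvd_index_of_normal _ _

lemma rhom_mul (R₁ R₂ : Euc d ≃ₗᵢ[ℝ] Euc d) :
    ((R₁ * R₂).toLinearEquiv.toLinearMap.toAddMonoidHom : Euc d →+ Euc d)
      = (R₁.toLinearEquiv.toLinearMap.toAddMonoidHom).comp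
          (R₂.toLinearEquiv.toLinearMap.toAddMonoidHom) := by
  ext x; rfl

lemma rotMap_mul (Γ : AddSubgroup (Euc d)) (R₁ R₂ : Euc d ≃ₗᵢ[ℝ] Euc d) :
    rotMap (R₁ * R₂) Γ = (rotMap R₂ Γ).map R₁.toLinearEquiv.toLinearMap.toAddMonoidHom := by
  unfold rotMap
  rw [AddSubgroup.map_map, ← rhom_mul]

lemma coinIndex_mul_dvd (Γ : AddSubgroup (Euc d)) (R₁ R₂ : Euc d ≃ₗᵢ[ℝ] Euc d) :
    coinIndex Γ (R₁ * R₂) ∣ coinIndex Γ R₁ * coinIndex Γ R₂ := by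
  set f : Euc d →+ Euc d := R₁.toLinearEquiv.toLinearMap.toAddMonoidHom with hf
  have hinj : Function.Injective f := fun a b h => R₁.injective h
  have hsurj : Function.Surjective f := fun a => ⟨R₁.symm a, R₁.apply_symm_apply a⟩
  set X := rotMap R₁ Γ with hX
  set Y := rotMap (R₁ * R₂) Γ with hYdef
  set Z := rotMap R₂ Γ with hZ
  have hY : Y = Z.map f := rotMap_mul Γ R₁ R₂
  have hXf : AddSubgroup.comap f X = Γ := AddSubgroup.comap_map_eq_self_of_injective hinj Γ
  have h2 : Y.relIndex (X ⊓ Γ) ∣ Z.relIndex Γ := by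
    have e1 : (AddSubgroup.comap f Y).relIndex (AddSubgroup.comap f (X ⊓ Γ))
        = Y.relIndex (X ⊓ Γ) := by
      rw [AddSubgroup.relIndex_comap, AddSubgroup.map_comap_eq_self_of_surjective hsurj]
    have e2 : AddSubgroup.comap f Y = Z := by
      rw [hY, AddSubgroup.comap_map_eq_self_of_injective hinj]
    rw [← e1, e2, AddSubgroup.comap_inf, hXf]
    exact relindex_dvd_relindex_of_le _ _ _ inf_le_left
  have h1 : (X ⊓ Y).relIndex Γ = Y.relIndex (X ⊓ Γ) * X.relIndex Γ := by
    have hac : X ⊓ Y ⊓ Γ = Y ⊓ (X ⊓ Γ) := by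
      rw [inf_comm X Y, inf_assoc]
    rw [← AddSubgroup.inf_relIndex_right (X ⊓ Y) Γ, hac,
      ← AddSubgroup.relIndex_mul_relIndex (Y ⊓ (X ⊓ Γ)) (X ⊓ Γ) Γ inf_le_right inf_le_right,
      AddSubgroup.inf_relIndex_right, AddSubgroup.inf_relIndex_right]
  have h0 : Y.relIndex Γ ∣ (X ⊓ Y).relIndex Γ :=
    AddSubgroup.relIndex_dvd_of_le_left Γ inf_le_right
  have hfinal : Y.relIndex Γ ∣ Z.relIndex Γ * X.relIndex Γ := by
    refine h0.trans ?_
    rw [h1]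
    exact mul_dvd_mul_right h2 _
  show Y.relIndex Γ ∣ X.relIndex Γ * Z.relIndex Γ
  rwa [mul_comm]

end CoinAux
open scoped ENNReal Pointwise

namespace CoinAux

lemma coe_vadd_set {d : ℕ} {K : AddSubgroup (Euc d)} (k : ↥K) (F : Set (Euc d)) :
    k +ᵥ F = (k : Euc d) +ᵥ F := rfl

lemma ennreal_nat_cancel {a : ℝ≥0∞} {m n : ℕ} (h0 : a ≠ 0) (ht : a ≠ ⊤)
    (h : (m : ℝ≥0∞) * a = n * a) : m = n := by
  have h2 : (m : ℝ≥0∞) = n := by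
    calc (m : ℝ≥0∞) = m * (a * a⁻¹) := by rw [ENNReal.mul_inv_cancel h0 ht, mul_one]
    _ = n * (a * a⁻¹) := by rw [← mul_assoc, h, mul_assoc]
    _ = n := by rw [ENNReal.mul_inv_cancel h0 ht, mul_one]
  exact_mod_cast h2

lemma covol_eq_index_mul {d : ℕ} {H K : AddSubgroup (Euc d)} (hHK : H ≤ K) {F S : Set (Euc d)}
    [Countable ↥H] [Countable ↥K]
    (hF : MeasureTheory.IsAddFundamentalDomain K F volume)
    (hS : MeasureTheory.IsAddFundamentalDomain H S volume)
    (hfin : (H.addSubgroupOf K).index ≠ 0) :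
    volume S = ((H.addSubgroupOf K).index : ℝ≥0∞) * volume F := by
  haveI hQfin : Finite (↥K ⧸ H.addSubgroupOf K) := Nat.finite_of_card_ne_zero hfin
  set T : Set (Euc d) :=
    ⋃ q : ↥K ⧸ H.addSubgroupOf K, (((Quotient.out q : ↥K) : Euc d) +ᵥ F) with hT
  have hqout : ∀ q : ↥K ⧸ H.addSubgroupOf K,
      (QuotientAddGroup.mk (Quotient.out q) : ↥K ⧸ H.addSubgroupOf K) = q :=
    fun q => QuotientAddGroup.out_eq' q
  have hNM : ∀ k : ↥K, MeasureTheory.NullMeasurableSet ((k : Euc d) +ᵥ F) volume := by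
    intro k
    have := hF.nullMeasurableSet_vadd k
    rwa [coe_vadd_set] at this
  have hdisjK : ∀ k₁ k₂ : ↥K, k₁ ≠ k₂ →
      MeasureTheory.AEDisjoint volume ((k₁ : Euc d) +ᵥ F) ((k₂ : Euc d) +ᵥ F) := by
    intro k₁ k₂ hne
    have := hF.aedisjoint hne
    simpa only [Function.onFun, coe_vadd_set] using this
  have hTfd : MeasureTheory.IsAddFundamentalDomain H T volume := by
    refine ⟨?_, ?_, ?_⟩
    · exact MeasureTheory.NullMeasurableSet.iUnion fun q => hNM _
    · filter_upwards [hF.ae_covers] with x hx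
      obtain ⟨k, hk⟩ := hx
      set q : ↥K ⧸ H.addSubgroupOf K := QuotientAddGroup.mk (-k) with hq
      have hmem : Quotient.out q + k ∈ H.addSubgroupOf K := by
        have h1 : (QuotientAddGroup.mk (Quotient.out q) : ↥K ⧸ H.addSubgroupOf K)
            = QuotientAddGroup.mk (-k) := hqout q
        rw [QuotientAddGroup.eq] at h1
        have h2 := (H.addSubgroupOf K).neg_mem h1
        have h3 : -(-Quotient.out q + -k) = Quotient.out q + k := by abel
        rwa [h3] at h2
      rw [AddSubgroup.mem_addSubgroupOf] at hmem
      refine ⟨⟨((Quotient.out q + k : ↥K) : Euc d), hmem⟩, ?_⟩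
      refine Set.mem_iUnion.mpr ⟨q, ?_⟩
      show (((Quotient.out q : ↥K) : Euc d) + (k : Euc d)) + x ∈ _
      rw [add_assoc]
      exact Set.vadd_mem_vadd_set hk
    · intro h₁ h₂ hne
      have hexp : ∀ g : ↥H, (g +ᵥ T : Set (Euc d)) =
          ⋃ q : ↥K ⧸ H.addSubgroupOf K,
            (((g : Euc d) + ((Quotient.out q : ↥K) : Euc d)) +ᵥ F) := by
        intro g
        show (g : Euc d) +ᵥ T = _
        rw [hT, Set.vadd_set_iUnion]
        exact Set.iUnion_congr fun q => (vadd_vadd _ _ _)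
      simp only [Function.onFun]
      rw [hexp h₁, hexp h₂]
      refine MeasureTheory.AEDisjoint.iUnion_left_iff.mpr fun q₁ => ?_
      refine MeasureTheory.AEDisjoint.iUnion_right_iff.mpr fun q₂ => ?_
      set a : ↥K := ⟨(h₁ : Euc d), hHK h₁.2⟩ with ha
      set b : ↥K := ⟨(h₂ : Euc d), hHK h₂.2⟩ with hb
      have hne' : a + Quotient.out q₁ ≠ b + Quotient.out q₂ := by
        intro heq
        have hq12 : q₁ = q₂ := by
          rw [← hqout q₁, ← hqout q₂, QuotientAddGroup.eq]
          have ho2 : Quotient.out q₂ = -b + (a + Quotient.out q₁) := by rw [heq]; abel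
          have h5 : -(Quotient.out q₁) + Quotient.out q₂ = a - b := by rw [ho2]; abel
          rw [h5, AddSubgroup.mem_addSubgroupOf]
          push_cast
          exact sub_mem h₁.2 h₂.2
        apply hne
        rw [hq12] at heq
        have hab : a = b := add_right_cancel heq
        have hcoe := congrArg (Subtype.val : ↥K → Euc d) hab
        exact Subtype.ext (show (h₁ : Euc d) = (h₂ : Euc d) from hcoe)
      have := hdisjK _ _ hne'
      simpa using this
  have hpair : Pairwise (Function.onFun (MeasureTheory.AEDisjoint volume)
      fun q : ↥K ⧸ H.addSubgroupOf K => ((Quotient.out q : ↥K) : Euc d) +ᵥ F) := by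
    intro q₁ q₂ hne
    exact hdisjK _ _ fun h => hne (by rw [← hqout q₁, ← hqout q₂, h])
  have hvolT : volume T = ((H.addSubgroupOf K).index : ℝ≥0∞) * volume F := by
    rw [hT, MeasureTheory.measure_iUnion₀ hpair fun q => hNM _]
    simp_rw [measure_vadd]
    haveI : Fintype (↥K ⧸ H.addSubgroupOf K) := Fintype.ofFinite _
    rw [tsum_fintype, Finset.sum_const, Finset.card_univ, AddSubgroup.index_eq_card,
      Nat.card_eq_fintype_card, nsmul_eq_mul]
  rw [hS.measure_eq hTfd]
  exact hvolT

end CoinAux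
namespace CoinAux

lemma relindex_symm_of_lattice {d : ℕ} (Γ : AddSubgroup (Euc d)) (hΓ : IsLattice Γ)
    (R : Euc d ≃ₗᵢ[ℝ] Euc d) (hR : R ∈ OCset Γ) :
    Γ.relIndex (rotMap R Γ) = (rotMap R Γ).relIndex Γ := by
  obtain ⟨b, rfl⟩ := hΓ
  set M : Submodule ℤ (Euc d) := Submodule.span ℤ (Set.range ⇑b) with hM
  set b' : Module.Basis (Fin d) ℝ (Euc d) := b.map R.toLinearEquiv with hb'
  set N : Submodule ℤ (Euc d) := Submodule.span ℤ (Set.range ⇑b') with hN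
  have h1 : N = M.map (R.toLinearEquiv.toLinearMap.restrictScalars ℤ) := by
    rw [hM, Submodule.map_span, hN]
    congr 1
    ext x
    constructor
    · rintro ⟨i, rfl⟩
      exact ⟨b i, ⟨i, rfl⟩, rfl⟩
    · rintro ⟨y, ⟨i, rfl⟩, rfl⟩
      exact ⟨i, rfl⟩
  have hNadd : N.toAddSubgroup = rotMap R M.toAddSubgroup := by
    ext x
    rw [Submodule.mem_toAddSubgroup, h1]
    simp only [Submodule.mem_map, rotMap, AddSubgroup.mem_map, Submodule.mem_toAddSubgroup]
    constructor
    · rintro ⟨y, hy, rfl⟩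
      exact ⟨y, hy, rfl⟩
    · rintro ⟨y, hy, rfl⟩
      exact ⟨y, hy, rfl⟩
  haveI : IsZLattice ℝ M := instIsZLatticeRealSpan b
  haveI : IsZLattice ℝ N := instIsZLatticeRealSpan b'
  set P : Submodule ℤ (Euc d) := M ⊓ N with hP
  have hPadd : P.toAddSubgroup = M.toAddSubgroup ⊓ rotMap R M.toAddSubgroup := by
    rw [← hNadd]
    rfl
  have hn : ((M.toAddSubgroup ⊓ rotMap R M.toAddSubgroup).addSubgroupOf M.toAddSubgroup).index
      ≠ 0 := hR.1.index_ne_zero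
  have hm : ((M.toAddSubgroup ⊓ rotMap R M.toAddSubgroup).addSubgroupOf
      (rotMap R M.toAddSubgroup)).index ≠ 0 := hR.2.index_ne_zero
  haveI hdM' : DiscreteTopology ((M : Set (Euc d)) : Type) :=
    inferInstanceAs (DiscreteTopology M)
  haveI hdP : DiscreteTopology P :=
    (DiscreteTopology.of_subset hdM' (fun x (hx : x ∈ (P : Set (Euc d))) => hx.1) :
      DiscreteTopology ((P : Set (Euc d)) : Type))
  haveI : IsZLattice ℝ P := by
    refine ⟨?_⟩
    rw [eq_top_iff, ← b.span_eq, Submodule.span_le]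
    rintro x ⟨i, rfl⟩
    have hbM : b i ∈ M.toAddSubgroup := Submodule.subset_span (Set.mem_range_self i)
    set n := ((M.toAddSubgroup ⊓ rotMap R M.toAddSubgroup).addSubgroupOf M.toAddSubgroup).index
      with hn'
    have hsm : n • b i ∈ P := by
      have h6 := AddSubgroup.nsmul_index_mem
        ((M.toAddSubgroup ⊓ rotMap R M.toAddSubgroup).addSubgroupOf M.toAddSubgroup)
        (⟨b i, hbM⟩ : ↥(M.toAddSubgroup))
      rw [AddSubgroup.mem_addSubgroupOf] at h6
      have h6' : n • b i ∈ M.toAddSubgroup ⊓ rotMap R M.toAddSubgroup := h6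
      rw [← Submodule.mem_toAddSubgroup, hPadd]
      exact h6'
    have hne : (n : ℝ) ≠ 0 := Nat.cast_ne_zero.mpr hn
    have hrw : b i = (n : ℝ)⁻¹ • ((n : ℝ) • b i) := by
      rw [smul_smul, inv_mul_cancel₀ hne, one_smul]
    rw [hrw]
    refine Submodule.smul_mem _ _ ?_
    have hrw2 : (n : ℝ) • b i = n • b i := Nat.cast_smul_eq_nsmul ℝ n (b i)
    rw [hrw2]
    exact Submodule.subset_span hsm
  haveI : Module.Finite ℤ P := ZLattice.module_finite ℝ P
  haveI : Module.Free ℤ P := ZLattice.module_free ℝ P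
  set bP := Module.Free.chooseBasis ℤ P with hbP
  set S := ZSpan.fundamentalDomain (bP.ofZLatticeBasis ℝ) with hSdef
  have hSfd : MeasureTheory.IsAddFundamentalDomain
      ↥(M.toAddSubgroup ⊓ rotMap R M.toAddSubgroup) S volume := by
    have h7 := ZSpan.isAddFundamentalDomain' (bP.ofZLatticeBasis ℝ) volume
    rw [Module.Basis.ofZLatticeBasis_span ℝ, hPadd] at h7
    exact h7
  have hFfd : MeasureTheory.IsAddFundamentalDomain ↥(M.toAddSubgroup)
      (ZSpan.fundamentalDomain b) volume := ZSpan.isAddFundamentalDomain' b volume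
  have hF'fd : MeasureTheory.IsAddFundamentalDomain ↥(rotMap R M.toAddSubgroup)
      (ZSpan.fundamentalDomain b') volume := by
    have h8 := ZSpan.isAddFundamentalDomain' b' volume
    rw [← hN, hNadd] at h8
    exact h8
  haveI hc1 : Countable ↥(M.toAddSubgroup) := inferInstanceAs (Countable M)
  haveI hc2 : Countable ↥(rotMap R M.toAddSubgroup) := by
    rw [← hNadd]; exact inferInstanceAs (Countable N)
  haveI hc3 : Countable ↥(M.toAddSubgroup ⊓ rotMap R M.toAddSubgroup) := by
    rw [← hPadd]; exact inferInstanceAs (Countable P)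
  have hv1 := covol_eq_index_mul (d := d)
    (H := M.toAddSubgroup ⊓ rotMap R M.toAddSubgroup) (K := M.toAddSubgroup)
    inf_le_left hFfd hSfd hn
  have hv2 := covol_eq_index_mul (d := d)
    (H := M.toAddSubgroup ⊓ rotMap R M.toAddSubgroup) (K := rotMap R M.toAddSubgroup)
    inf_le_right hF'fd hSfd hm
  have hFF' : volume (ZSpan.fundamentalDomain b') = volume (ZSpan.fundamentalDomain b) := by
    have h10 : ZSpan.fundamentalDomain b' = ⇑R.toLinearEquiv '' ZSpan.fundamentalDomain b :=
      (ZSpan.map_fundamentalDomain b R.toLinearEquiv).symm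
    have h9 : ZSpan.fundamentalDomain b' = ⇑R.symm ⁻¹' (ZSpan.fundamentalDomain b) := by
      rw [h10]
      ext x
      constructor
      · rintro ⟨y, hy, rfl⟩
        have : R.symm (R y) = y := R.symm_apply_apply y
        simpa [this] using hy
      · intro hx
        refine ⟨R.symm x, hx, ?_⟩
        exact R.apply_symm_apply x
    rw [h9]
    exact (R.symm.measurePreserving).measure_preimage
      ((ZSpan.fundamentalDomain_measurableSet b).nullMeasurableSet)
  have hvne : volume (ZSpan.fundamentalDomain b) ≠ 0 := ZSpan.measure_fundamentalDomain_ne_zero b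
  have hvnt : volume (ZSpan.fundamentalDomain b) ≠ ⊤ :=
    ((ZSpan.fundamentalDomain_isBounded b).measure_lt_top).ne
  rw [hFF'] at hv2
  have hcancel := ennreal_nat_cancel hvne hvnt (hv1.symm.trans hv2)
  have e1 : ((M.toAddSubgroup ⊓ rotMap R M.toAddSubgroup).addSubgroupOf M.toAddSubgroup).index
      = (rotMap R M.toAddSubgroup).relIndex M.toAddSubgroup := by
    show (M.toAddSubgroup ⊓ rotMap R M.toAddSubgroup).relIndex M.toAddSubgroup = _
    rw [inf_comm, AddSubgroup.inf_relIndex_right]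
  have e2 : ((M.toAddSubgroup ⊓ rotMap R M.toAddSubgroup).addSubgroupOf
      (rotMap R M.toAddSubgroup)).index
      = M.toAddSubgroup.relIndex (rotMap R M.toAddSubgroup) := by
    show (M.toAddSubgroup ⊓ rotMap R M.toAddSubgroup).relIndex (rotMap R M.toAddSubgroup) = _
    rw [AddSubgroup.inf_relIndex_right]
  rw [← e2, ← e1]
  exact hcancel.symm

lemma coinIndex_inv {d : ℕ} (Γ : AddSubgroup (Euc d)) (hΓ : IsLattice Γ)
    (R : Euc d ≃ₗᵢ[ℝ] Euc d) (hR : R ∈ OCset Γ) : coinIndex Γ R⁻¹ = coinIndex Γ R := by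
  have h1 : rotMap R⁻¹ Γ = AddSubgroup.comap (R.toLinearEquiv.toLinearMap.toAddMonoidHom) Γ := by
    ext x
    simp only [rotMap, AddSubgroup.mem_map, AddSubgroup.mem_comap]
    constructor
    · rintro ⟨y, hy, rfl⟩
      show R (R.symm y) ∈ Γ
      rw [R.apply_symm_apply]
      exact hy
    · intro hx
      refine ⟨R x, hx, ?_⟩
      show R.symm (R x) = x
      rw [R.symm_apply_apply]
  show (rotMap R⁻¹ Γ).relIndex Γ = (rotMap R Γ).relIndex Γ
  rw [h1, AddSubgroup.relIndex_comap]
  exact relindex_symm_of_lattice Γ hΓ R hR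

end CoinAux

theorem coinIndex_mul {d : ℕ} (Γ : AddSubgroup (Euc d)) (hΓ : IsLattice Γ)
    (R₁ R₂ : Euc d ≃ₗᵢ[ℝ] Euc d) (hR₁ : R₁ ∈ OCset Γ) (hR₂ : R₂ ∈ OCset Γ) :
    coinIndex Γ (R₁ * R₂) ∣ coinIndex Γ R₁ * coinIndex Γ R₂ ∧
    (Nat.Coprime (coinIndex Γ R₁) (coinIndex Γ R₂) →
      coinIndex Γ (R₁ * R₂) = coinIndex Γ R₁ * coinIndex Γ R₂) := by
  refine ⟨CoinAux.coinIndex_mul_dvd Γ R₁ R₂, ?_⟩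
  intro hcop
  have e₁ : coinIndex Γ R₁⁻¹ = coinIndex Γ R₁ := CoinAux.coinIndex_inv Γ hΓ R₁ hR₁
  have e₂ : coinIndex Γ R₂⁻¹ = coinIndex Γ R₂ := CoinAux.coinIndex_inv Γ hΓ R₂ hR₂
  have d₁ : coinIndex Γ R₁ ∣ coinIndex Γ (R₁ * R₂) * coinIndex Γ R₂ := by
    have h := CoinAux.coinIndex_mul_dvd Γ (R₁ * R₂) R₂⁻¹
    rw [show R₁ * R₂ * R₂⁻¹ = R₁ from mul_inv_cancel_right _ _, e₂] at h
    exact h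
  have ha : coinIndex Γ R₁ ∣ coinIndex Γ (R₁ * R₂) := hcop.dvd_of_dvd_mul_right d₁
  have d₂ : coinIndex Γ R₂ ∣ coinIndex Γ R₁ * coinIndex Γ (R₁ * R₂) := by
    have h := CoinAux.coinIndex_mul_dvd Γ R₁⁻¹ (R₁ * R₂)
    rw [show R₁⁻¹ * (R₁ * R₂) = R₂ from inv_mul_cancel_left _ _, e₁] at h
    exact h
  have hb : coinIndex Γ R₂ ∣ coinIndex Γ (R₁ * R₂) := hcop.symm.dvd_of_dvd_mul_left d₂
  exact Nat.dvd_antisymm (CoinAux.coinIndex_mul_dvd Γ R₁ R₂)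
    (Nat.Coprime.mul_dvd_of_dvd_of_dvd hcop ha hb)
end
end

section
/- Let Λ be a sublattice of Γ ⊆ ℝ^d of index m and let R be a coincidence isometry. Then Σ_Λ(R) divides m·Σ_Γ(R) and Σ_Γ(R) divides m·Σ_Λ(R). -/
noncomputable section

/-- In an additive commutative group, `relindex` is monotone (for divisibility) in the
right argument. -/
lemma relindex_dvd_of_le_right' {G : Type*} [AddCommGroup G] {K L : AddSubgroup G}
    (H : AddSubgroup G) (hKL : K ≤ L) : H.relIndex K ∣ H.relIndex L := by
  rw [← AddSubgroup.relIndex_addSubgroupOf hKL]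
  exact AddSubgroup.relIndex_dvd_index_of_normal _ _

lemma rotMap_relindex_eq {d : ℕ} (R : Euc d ≃ₗᵢ[ℝ] Euc d) (Λ Γ : AddSubgroup (Euc d)) :
    (rotMap R Λ).relIndex (rotMap R Γ) = Λ.relIndex Γ := by
  have hinj : Function.Injective R.toLinearEquiv.toLinearMap.toAddMonoidHom :=
    R.toLinearEquiv.injective
  have := AddSubgroup.relIndex_comap
    (rotMap R Λ) R.toLinearEquiv.toLinearMap.toAddMonoidHom Γ
  rw [show (rotMap R Λ).comap R.toLinearEquiv.toLinearMap.toAddMonoidHom = Λ from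
    AddSubgroup.comap_map_eq_self_of_injective hinj Λ] at this
  exact this.symm

theorem coinIndex_sublattice {d : ℕ} (Γ Λ : AddSubgroup (Euc d))
    (hΓ : IsLattice Γ) (hΛ : IsLattice Λ) (hsub : Λ ≤ Γ)
    (m : ℕ) (hm : Λ.relIndex Γ = m) (hm0 : 0 < m)
    (R : Euc d ≃ₗᵢ[ℝ] Euc d) (hR : R ∈ OCset Γ) :
    coinIndex Λ R ∣ m * coinIndex Γ R ∧ coinIndex Γ R ∣ m * coinIndex Λ R := by
  subst hm
  have hrot : rotMap R Λ ≤ rotMap R Γ := AddSubgroup.map_mono hsub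
  constructor
  · -- coinIndex Λ R ∣ m * coinIndex Γ R
    have h1 : (rotMap R Λ ⊓ Λ).relIndex (Λ ⊓ rotMap R Γ) *
        (Λ ⊓ rotMap R Γ).relIndex Λ = (rotMap R Λ ⊓ Λ).relIndex Λ :=
      AddSubgroup.relIndex_mul_relIndex _ _ _
        (le_inf inf_le_right (le_trans inf_le_left hrot)) inf_le_left
    have h2 : (rotMap R Λ ⊓ Λ).relIndex (Λ ⊓ rotMap R Γ) ∣ Λ.relIndex Γ := by
      rw [← rotMap_relindex_eq R Λ Γ]
      have : (rotMap R Λ ⊓ Λ).relIndex (Λ ⊓ rotMap R Γ) =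
          (rotMap R Λ).relIndex (Λ ⊓ rotMap R Γ) := by
        rw [← AddSubgroup.inf_relIndex_right (rotMap R Λ) (Λ ⊓ rotMap R Γ),
          ← AddSubgroup.inf_relIndex_right (rotMap R Λ ⊓ Λ) (Λ ⊓ rotMap R Γ)]
        congr 1
        rw [inf_assoc, inf_left_idem]
      rw [this]
      exact relindex_dvd_of_le_right' _ inf_le_right
    have h3 : (Λ ⊓ rotMap R Γ).relIndex Λ ∣ (rotMap R Γ).relIndex Γ := by
      rw [show (Λ ⊓ rotMap R Γ).relIndex Λ = (rotMap R Γ).relIndex Λ by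
        rw [inf_comm]; exact AddSubgroup.inf_relIndex_right _ _]
      exact relindex_dvd_of_le_right' _ hsub
    have : coinIndex Λ R = (rotMap R Λ ⊓ Λ).relIndex Λ := by
      rw [AddSubgroup.inf_relIndex_right]; rfl
    rw [this, ← h1]
    exact mul_dvd_mul h2 h3
  · -- coinIndex Γ R ∣ m * coinIndex Λ R
    have h1 : (rotMap R Λ ⊓ Λ).relIndex Λ * Λ.relIndex Γ =
        (rotMap R Λ ⊓ Λ).relIndex Γ :=
      AddSubgroup.relIndex_mul_relIndex _ _ _ inf_le_right hsub
    have h2 : (rotMap R Γ).relIndex Γ ∣ (rotMap R Λ ⊓ Λ).relIndex Γ := by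
      rw [← AddSubgroup.inf_relIndex_right (rotMap R Γ) Γ]
      exact AddSubgroup.relIndex_dvd_of_le_left _
        (le_inf (le_trans inf_le_left hrot) (le_trans inf_le_right hsub))
    have : coinIndex Λ R = (rotMap R Λ ⊓ Λ).relIndex Λ := by
      rw [AddSubgroup.inf_relIndex_right]; rfl
    show coinIndex Γ R ∣ Λ.relIndex Γ * coinIndex Λ R
    rw [this, mul_comm, h1]
    exact h2
end
end

section
/- Let Γ ⊆ ℝ^d be a lattice and R ∈ OC(Γ). Then lcm(den_Γ(R), den_Γ(R⁻¹)) divides Σ_Γ(R), Σ_Γ(R) divides gcd(den_Γ(R), den_Γ(R⁻¹))^d, and Σ_Γ(R)² divides lcm(den_Γ(R), den_Γ(R⁻¹))^d. -/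
noncomputable section

namespace DenAux

variable {d : ℕ}

lemma det_rel {N O : Submodule ℤ (Euc d)} (h : N ≤ O) (bO : Module.Basis (Fin d) ℤ O)
    (v : Fin d → N) (b₀ : Module.Basis (Fin d) ℝ (Euc d)) :
    ∃ A : Matrix (Fin d) (Fin d) ℤ,
      b₀.det (fun i => (v i : Euc d)) = (A.det : ℝ) * b₀.det (fun i => (bO i : Euc d)) := by
  classical
  set A : Matrix (Fin d) (Fin d) ℤ :=
    Matrix.of (fun l j => bO.repr ⟨(v j : Euc d), h (v j).2⟩ l) with hA
  refine ⟨A, ?_⟩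
  have key : ∀ j, (v j : Euc d) = ∑ l, A l j • (bO l : Euc d) := by
    intro j
    have h1 := bO.sum_repr ⟨(v j : Euc d), h (v j).2⟩
    have h2 := congrArg (Submodule.subtype O) h1
    simp only [map_sum, map_zsmul, Submodule.coe_subtype] at h2
    exact h2.symm
  have hM : b₀.toMatrix (fun i => (v i : Euc d)) =
      b₀.toMatrix (fun i => (bO i : Euc d)) * A.map (Int.cast : ℤ → ℝ) := by
    ext i j
    rw [Matrix.mul_apply]
    simp only [Module.Basis.toMatrix_apply, Matrix.map_apply]
    rw [key j, map_sum]
    simp only [map_zsmul, Finsupp.coe_finset_sum, Finset.sum_apply, Finsupp.coe_smul,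
      Pi.smul_apply, zsmul_eq_mul, Int.cast_id]
    refine Finset.sum_congr rfl fun l _ => ?_
    simp [mul_comm]
  have hdet := congrArg Matrix.det hM
  rw [Matrix.det_mul] at hdet
  rw [Module.Basis.det_apply, Module.Basis.det_apply, hdet]
  have : (A.map (Int.cast : ℤ → ℝ)).det = ((A.det : ℤ) : ℝ) := by
    rw [show A.map (Int.cast : ℤ → ℝ) = (Int.castRingHom ℝ).mapMatrix A from rfl,
      ← RingHom.map_det]
    rfl
  rw [this]; ring

lemma det_abs_eq {N : Submodule ℤ (Euc d)} (b c : Module.Basis (Fin d) ℤ N)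
    (b₀ : Module.Basis (Fin d) ℝ (Euc d)) (hb : b₀.det (fun i => (b i : Euc d)) ≠ 0) :
    |b₀.det (fun i => (c i : Euc d))| = |b₀.det (fun i => (b i : Euc d))| := by
  obtain ⟨A, hA⟩ := det_rel le_rfl b (fun i => c i) b₀
  obtain ⟨B, hB⟩ := det_rel le_rfl c (fun i => b i) b₀
  rw [hA, ← mul_assoc] at hB
  have h1 : ((B.det * A.det : ℤ) : ℝ) = 1 := by
    have := mul_right_cancel₀ hb (show ((B.det : ℝ) * A.det) * b₀.det (fun i => (b i : Euc d)) =
      1 * b₀.det (fun i => (b i : Euc d)) by rw [one_mul]; exact hB.symm)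
    rw [Int.cast_mul]
    exact this
  have h2 : B.det * A.det = 1 := by exact_mod_cast h1
  have h3 : A.det = 1 ∨ A.det = -1 := Int.isUnit_iff.mp (IsUnit.of_mul_eq_one _ (by linarith [h2, mul_comm B.det A.det] : A.det * B.det = 1))
  rw [hA, abs_mul]
  rcases h3 with h | h <;> rw [h] <;> norm_num

lemma relindex_eq_card {N O : Submodule ℤ (Euc d)} :
    N.toAddSubgroup.relIndex O.toAddSubgroup = Nat.card (O ⧸ (N.comap O.subtype)) := by
  have heq : N.toAddSubgroup.addSubgroupOf O.toAddSubgroup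
      = (N.comap O.subtype).toAddSubgroup := by
    ext x
    simp only [AddSubgroup.mem_addSubgroupOf, Submodule.mem_toAddSubgroup, Submodule.mem_comap]
    exact Iff.rfl
  rw [AddSubgroup.relIndex, heq]
  rfl

lemma relindex_mul_det {N O : Submodule ℤ (Euc d)} (h : N ≤ O) (bO : Module.Basis (Fin d) ℤ O)
    (bN : Module.Basis (Fin d) ℤ N) (b₀ : Module.Basis (Fin d) ℝ (Euc d))
    (hO : b₀.det (fun i => (bO i : Euc d)) ≠ 0) :
    ((N.toAddSubgroup.relIndex O.toAddSubgroup : ℕ) : ℝ) * |b₀.det (fun i => (bO i : Euc d))| =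
      |b₀.det (fun i => (bN i : Euc d))| := by
  classical
  obtain ⟨n, snf⟩ := Submodule.smithNormalForm bO (N.comap O.subtype)
  obtain ⟨bM, bN', f, a, hsnf⟩ := snf
  have hnd : d = n := by
    have e := bN'.indexEquiv (bN.map (Submodule.comapSubtypeEquivOfLe h).symm)
    simpa using (Fintype.card_eq.mpr ⟨e⟩).symm
  subst hnd
  have hfbij : Function.Bijective f := (Finite.injective_iff_bijective).mp f.injective
  set e : Fin d ≃ Fin d := Equiv.ofBijective f hfbij with he
  have hefeq : ∀ i, e i = f i := fun i => rfl
  have ha : ∀ i, a i ≠ 0 := by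
    intro i hi
    have h1 := hsnf i
    rw [hi, zero_smul] at h1
    exact bN'.ne_zero i (Subtype.coe_injective h1)
  have hcond : ∀ i j, (f i = j) ↔ (i = e.symm j) := fun i j => by
    rw [← hefeq i]; exact e.apply_eq_iff_eq_symm_apply
  have repr_sum : ∀ (c : Fin d → ℤ) (j : Fin d),
      bM.repr (∑ i, c i • (a i • bM (f i))) j = a (e.symm j) * c (e.symm j) := by
    intro c j
    rw [map_sum]
    simp only [smul_smul, map_smul, Module.Basis.repr_self, Finsupp.smul_single, smul_eq_mul, mul_one,
      Finsupp.coe_finset_sum, Finset.sum_apply, Finsupp.single_apply, hcond]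
    rw [Finset.sum_ite_eq' Finset.univ (e.symm j) (fun i => c i * a i)]
    simp [mul_comm]
  have mem_iff : ∀ x : ↥O, x ∈ N.comap O.subtype ↔ ∀ j, a (e.symm j) ∣ bM.repr x j := by
    intro x
    rw [bN'.mem_submodule_iff']
    constructor
    · rintro ⟨c, rfl⟩ j
      have hs : (∑ i, c i • ((bN' i : ↥O))) = ∑ i, c i • (a i • bM (f i)) :=
        Finset.sum_congr rfl fun i _ => by rw [hsnf i]
      rw [hs, repr_sum]
      exact Dvd.intro _ rfl
    · intro hx
      choose q hq using hx
      refine ⟨fun i => q (e i), bM.repr.injective (Finsupp.ext fun j => ?_)⟩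
      have hs : (∑ i, q (e i) • ((bN' i : ↥O))) = ∑ i, q (e i) • (a i • bM (f i)) :=
        Finset.sum_congr rfl fun i _ => by rw [hsnf i]
      rw [hs, repr_sum (fun i => q (e i)), Equiv.apply_symm_apply, ← hq j]
  have hcard : Nat.card (↥O ⧸ N.comap O.subtype) = ∏ i, (a i).natAbs := by
    have hmap : Submodule.map (bM.equivFun : ↥O →ₗ[ℤ] (Fin d → ℤ)) (N.comap O.subtype)
        = Submodule.pi Set.univ (fun j => Ideal.span ({a (e.symm j)} : Set ℤ)) := by
      ext x
      simp only [Submodule.mem_map, Submodule.mem_pi, Set.mem_univ, forall_true_left,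
        Ideal.mem_span_singleton, LinearEquiv.coe_coe, Module.Basis.equivFun_apply]
      constructor
      · rintro ⟨y, hy, rfl⟩ j
        exact (mem_iff y).mp hy j
      · intro hx
        refine ⟨∑ i, x i • bM i, (mem_iff _).mpr fun j => ?_, ?_⟩
        · rw [Module.Basis.repr_sum_self]
          exact hx j
        · rw [Module.Basis.repr_sum_self]
    have e1 : (↥O ⧸ N.comap O.subtype) ≃
        ((Fin d → ℤ) ⧸ Submodule.pi Set.univ (fun j => Ideal.span ({a (e.symm j)} : Set ℤ))) :=
      (Submodule.Quotient.equiv _ _ (bM.equivFun) hmap).toEquiv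
    have e2 := Submodule.quotientPi (fun j : Fin d => Ideal.span ({a (e.symm j)} : Set ℤ))
    rw [Nat.card_congr (e1.trans e2.toEquiv), Nat.card_pi,
      ← Equiv.prod_comp e.symm (fun i => (a i).natAbs)]
    refine Finset.prod_congr rfl fun j _ => ?_
    rw [Nat.card_congr (Int.quotientSpanEquivZMod (a (e.symm j))).toEquiv, Nat.card_zmod]
  have hdetN' : b₀.det (fun i => ((bN' i : ↥O) : Euc d)) =
      ((∏ i, ((a i : ℝ))) * ((Equiv.Perm.sign e : ℤ) : ℝ)) * b₀.det (fun i => ((bM i : ↥O) : Euc d)) := by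
    have h1 : (fun i => ((bN' i : ↥O) : Euc d))
        = fun i => (a i : ℝ) • (((bM (e i) : ↥O) : Euc d)) := by
      funext i
      rw [hefeq]
      have h0 := congrArg (fun z : ↥O => (z : Euc d)) (hsnf i)
      rw [h0, Submodule.coe_smul, Int.cast_smul_eq_zsmul]
    rw [h1]
    have h2 : (b₀.det fun i => (a i : ℝ) • (((bM (e i) : ↥O)) : Euc d))
        = (∏ i, (a i : ℝ)) • b₀.det (fun i => ((bM (e i) : ↥O) : Euc d)) :=
      (b₀.det).toMultilinearMap.map_smul_univ (fun i => (a i : ℝ))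
        (fun i => ((bM (e i) : ↥O) : Euc d))
    rw [h2]
    have h3 : (fun j => ((bM (e j) : ↥O) : Euc d)) = (fun j => ((bM j : ↥O) : Euc d)) ∘ e := rfl
    rw [h3, AlternatingMap.map_perm]
    simp only [smul_smul, Units.smul_def, zsmul_eq_mul, smul_eq_mul]
    ring
  -- transfer bN' to a basis of N and compare with bN
  have hcoe : ∀ i, (((bN'.map (Submodule.comapSubtypeEquivOfLe h)) i : Euc d))
      = ((bN' i : ↥O) : Euc d) := by
    intro i
    simp [Submodule.comapSubtypeEquivOfLe_apply_coe]
  have habsM : |b₀.det (fun i => ((bM i : ↥O) : Euc d))| = |b₀.det (fun i => (bO i : Euc d))| :=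
    det_abs_eq bO bM b₀ hO
  have hMne : b₀.det (fun i => ((bM i : ↥O) : Euc d)) ≠ 0 := by
    intro h0
    rw [h0, abs_zero] at habsM
    exact hO (abs_eq_zero.mp habsM.symm)
  have hN'ne : b₀.det (fun i => ((bN' i : ↥O) : Euc d)) ≠ 0 := by
    rw [hdetN']
    refine mul_ne_zero (mul_ne_zero ?_ ?_) hMne
    · exact Finset.prod_ne_zero_iff.mpr fun i _ => Int.cast_ne_zero.mpr (ha i)
    · exact by rcases Int.units_eq_one_or (Equiv.Perm.sign e) with h6 | h6 <;> rw [h6] <;> norm_num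
  have habsN : |b₀.det (fun i => (bN i : Euc d))| = |b₀.det (fun i => ((bN' i : ↥O) : Euc d))| := by
    have hfun : (fun i => (((bN'.map (Submodule.comapSubtypeEquivOfLe h)) i : Euc d)))
        = fun i => ((bN' i : ↥O) : Euc d) := funext hcoe
    have := det_abs_eq (bN'.map (Submodule.comapSubtypeEquivOfLe h)) bN b₀ (by rw [hfun]; exact hN'ne)
    rw [this, hfun]
  rw [relindex_eq_card, hcard, habsN, hdetN', abs_mul, abs_mul]
  have h4 : ((∏ i, (a i).natAbs : ℕ) : ℝ) = |∏ i, ((a i : ℝ))| := by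
    rw [Finset.abs_prod]
    push_cast [Nat.cast_natAbs]
    rfl
  have h5 : |((Equiv.Perm.sign e : ℤ) : ℝ)| = 1 := by
    rcases Int.units_eq_one_or (Equiv.Perm.sign e) with h | h <;> rw [h] <;> norm_num
  rw [h4, h5, habsM]
  ring

lemma exists_basis_of_le {N O : Submodule ℤ (Euc d)} (h : N ≤ O) (bO : Module.Basis (Fin d) ℤ O)
    (v : Fin d → Euc d) (hvN : ∀ i, v i ∈ N) (hv : LinearIndependent ℝ v) :
    Nonempty (Module.Basis (Fin d) ℤ N) := by
  obtain ⟨n, bN⟩ := Submodule.basisOfPidOfLE h bO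
  haveI : Module.Finite ℤ ↥N := Module.Finite.of_basis bN
  haveI : Module.Finite ℤ ↥O := Module.Finite.of_basis bO
  have hfinN : Module.finrank ℤ ↥N = n := by
    rw [Module.finrank_eq_card_basis bN, Fintype.card_fin]
  have hfinO : Module.finrank ℤ ↥O = d := by
    rw [Module.finrank_eq_card_basis bO, Fintype.card_fin]
  have hcast : Function.Injective fun r : ℤ => r • (1 : ℝ) := by
    intro r s hrs
    simpa using hrs
  have hdn : d ≤ n := by
    have li1 : LinearIndependent ℤ v := hv.restrict_scalars hcast
    have li2 : LinearIndependent ℤ (fun i => (⟨v i, hvN i⟩ : N)) := by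
      apply LinearIndependent.of_comp N.subtype
      exact li1
    simpa [hfinN] using li2.fintype_card_le_finrank
  have hnd : n ≤ d := by
    have li3 : LinearIndependent ℤ (fun i => (Submodule.inclusion h (bN i) : O)) := by
      exact bN.linearIndependent.map' (Submodule.inclusion h)
        (LinearMap.ker_eq_bot.mpr (Submodule.inclusion_injective h))
    simpa [hfinO] using li3.fintype_card_le_finrank
  exact ⟨bN.reindex (finCongr (le_antisymm hnd hdn))⟩

lemma gcd_pow_nat (a b n : ℕ) : Nat.gcd (a ^ n) (b ^ n) = Nat.gcd a b ^ n := by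
  rcases Nat.eq_zero_or_pos (Nat.gcd a b) with h | h
  · obtain ⟨rfl, rfl⟩ : a = 0 ∧ b = 0 :=
      ⟨Nat.eq_zero_of_gcd_eq_zero_left h, Nat.eq_zero_of_gcd_eq_zero_right h⟩
    simp
  · set g := Nat.gcd a b with hg
    obtain ⟨a', ha⟩ := Nat.gcd_dvd_left a b
    obtain ⟨b', hb⟩ := Nat.gcd_dvd_right a b
    have hc : Nat.Coprime a' b' := by
      have h1 : a / g = a' := by rw [ha]; exact Nat.mul_div_cancel_left _ h
      have h2 : b / g = b' := by rw [hb]; exact Nat.mul_div_cancel_left _ h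
      have h3 := Nat.coprime_div_gcd_div_gcd h
      rwa [← hg, h1, h2] at h3
    rw [show Nat.gcd (a ^ n) (b ^ n)
        = Nat.gcd ((Nat.gcd a b * a') ^ n) ((Nat.gcd a b * b') ^ n) by rw [← ha, ← hb],
      Nat.mul_pow, Nat.mul_pow, Nat.gcd_mul_left]
    have hcp : Nat.Coprime (a' ^ n) (b' ^ n) := hc.pow n n
    rw [Nat.Coprime.gcd_eq_one hcp, mul_one, hg]

lemma mem_scal_iff {d : ℕ} {Γ : AddSubgroup (Euc d)} {R : Euc d ≃ₗᵢ[ℝ] Euc d} {α : ℝ} :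
    α ∈ Scal Γ R ↔ ∀ x ∈ Γ, α • R x ∈ Γ := by
  constructor
  · intro h x hx
    exact h (AddSubgroup.mem_map_of_mem _ hx)
  · rintro h y ⟨x, hx, rfl⟩
    exact h x hx

lemma den_dvd {d : ℕ} {Γ : AddSubgroup (Euc d)} {R : Euc d ≃ₗᵢ[ℝ] Euc d} {δ : ℝ} {k : ℕ}
    (hδ : IsDen Γ R δ) (hk : δ = (k : ℝ)) {n : ℕ} (hn : 0 < n)
    (h : ((n : ℕ) : ℝ) ∈ Scal Γ R) : k ∣ n := by
  have hk0 : 0 < k := by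
    have := hδ.1; rw [hk] at this; exact_mod_cast this
  have hkS : ((k : ℕ) : ℝ) ∈ Scal Γ R := hk ▸ hδ.2.1
  have hmod : ((n % k : ℕ) : ℝ) ∈ Scal Γ R := by
    rw [mem_scal_iff] at h hkS ⊢
    intro x hx
    have h1 := h x hx
    have h2 : ((k * (n / k) : ℕ) : ℝ) • R x ∈ Γ := by
      have he : ((k * (n / k) : ℕ) : ℝ) • R x = (n / k) • (((k : ℕ) : ℝ) • R x) := by
        rw [← Nat.cast_smul_eq_nsmul ℝ (n / k) (((k : ℕ) : ℝ) • R x), smul_smul]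
        congr 1
        push_cast
        ring
      rw [he]
      exact AddSubgroup.nsmul_mem Γ (hkS x hx) _
    have h3 : ((n % k : ℕ) : ℝ) • R x = ((n : ℕ) : ℝ) • R x - ((k * (n / k) : ℕ) : ℝ) • R x := by
      rw [← sub_smul]
      congr 1
      have h4 : ((n % k : ℕ) : ℝ) + ((k * (n / k) : ℕ) : ℝ) = ((n : ℕ) : ℝ) := by
        exact_mod_cast congrArg (Nat.cast : ℕ → ℝ) (Nat.mod_add_div n k)
      linarith
    rw [h3]
    exact sub_mem h1 h2
  by_contra hndvd
  have hpos : 0 < n % k := Nat.pos_of_ne_zero fun h0 => hndvd (Nat.dvd_of_mod_eq_zero h0)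
  have hle := hδ.2.2 _ (by exact_mod_cast hpos) hmod
  rw [hk] at hle
  have hlt := Nat.mod_lt n hk0
  have : (k : ℝ) ≤ (n % k : ℕ) := hle
  exact absurd hlt (not_lt.mpr (by exact_mod_cast this))

lemma relindex_map_addequiv {d : ℕ} (e : Euc d ≃+ Euc d) (H K : AddSubgroup (Euc d)) :
    (H.map (e : Euc d →+ Euc d)).relIndex (K.map (e : Euc d →+ Euc d)) = H.relIndex K := by
  have h1 : (K.map (e : Euc d →+ Euc d)).map (e.symm : Euc d →+ Euc d) = K := by
    rw [AddSubgroup.map_map]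
    have : (e.symm : Euc d →+ Euc d).comp (e : Euc d →+ Euc d) = AddMonoidHom.id _ :=
      AddMonoidHom.ext fun x => e.symm_apply_apply x
    rw [this, AddSubgroup.map_id]
  rw [AddSubgroup.map_equiv_eq_comap_symm, AddSubgroup.relIndex_comap, h1]

def scaleE (d : ℕ) (c : ℝ) (hc : c ≠ 0) : Euc d ≃ₗ[ℤ] Euc d where
  toFun x := c • x
  invFun x := c⁻¹ • x
  map_add' x y := smul_add c x y
  map_smul' z x := smul_comm c z x
  left_inv x := inv_smul_smul₀ hc x
  right_inv x := smul_inv_smul₀ hc x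

end DenAux

theorem den_coinIndex_divisibility {d : ℕ} (Γ : AddSubgroup (Euc d)) (hΓ : IsLattice Γ)
    (R : Euc d ≃ₗᵢ[ℝ] Euc d) (hR : R ∈ OCset Γ)
    (δ δ' : ℝ) (hδ : IsDen Γ R δ) (hδ' : IsDen Γ R⁻¹ δ')
    (k k' : ℕ) (hk : δ = (k : ℝ)) (hk' : δ' = (k' : ℝ)) :
    Nat.lcm k k' ∣ coinIndex Γ R ∧
    coinIndex Γ R ∣ (Nat.gcd k k') ^ d ∧
    (coinIndex Γ R) ^ 2 ∣ (Nat.lcm k k') ^ d := by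
  classical
  obtain ⟨b, hb⟩ := hΓ
  set Γ' : Submodule ℤ (Euc d) := Submodule.span ℤ (Set.range ⇑b) with hΓ'
  have hk0 : 0 < k := by have := hδ.1; rw [hk] at this; exact_mod_cast this
  have hk'0 : 0 < k' := by have := hδ'.1; rw [hk'] at this; exact_mod_cast this
  set eR : Euc d ≃ₗ[ℤ] Euc d := R.toLinearEquiv.restrictScalars ℤ with heR
  have heRapp : ∀ x, eR x = R x := fun _ => rfl
  set Γ₂ : Submodule ℤ (Euc d) := Γ'.map (eR : Euc d →ₗ[ℤ] Euc d) with hΓ₂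
  have hmem : ∀ x, x ∈ Γ ↔ x ∈ Γ' := by intro x; rw [hb]; exact Iff.rfl
  have hrot : rotMap R Γ = Γ₂.toAddSubgroup := by
    ext x
    simp only [rotMap, AddSubgroup.mem_map, Submodule.mem_toAddSubgroup, hΓ₂, Submodule.mem_map]
    constructor
    · rintro ⟨y, hy, rfl⟩; exact ⟨y, (hmem y).mp hy, rfl⟩
    · rintro ⟨y, hy, rfl⟩; exact ⟨y, (hmem y).mpr hy, rfl⟩
  have hRinv1 : ∀ x, R (R⁻¹ x) = x := by
    intro x
    have h0 : R * R⁻¹ = 1 := mul_inv_cancel R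
    exact congrArg (fun T : Euc d ≃ₗᵢ[ℝ] Euc d => T x) h0
  have hRinv2 : ∀ x, R⁻¹ (R x) = x := by
    intro x
    have h0 : R⁻¹ * R = 1 := inv_mul_cancel R
    exact congrArg (fun T : Euc d ≃ₗᵢ[ℝ] Euc d => T x) h0
  have hkS : ∀ x ∈ Γ', ((k : ℕ) : ℝ) • R x ∈ Γ' := by
    intro x hx
    exact (hmem _).mp ((DenAux.mem_scal_iff.mp (hk ▸ hδ.2.1)) x ((hmem x).mpr hx))
  have hk'S : ∀ x ∈ Γ', ((k' : ℕ) : ℝ) • R⁻¹ x ∈ Γ' := by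
    intro x hx
    exact (hmem _).mp ((DenAux.mem_scal_iff.mp (hk' ▸ hδ'.2.1)) x ((hmem x).mpr hx))
  have natsmul : ∀ (P : Submodule ℤ (Euc d)) (n : ℕ) (x : Euc d), x ∈ P →
      ((n : ℕ) : ℝ) • x ∈ P := by
    intro P n x hx
    have hcs : ((n : ℕ) : ℝ) • x = (n : ℤ) • x := by
      rw [← Int.cast_smul_eq_zsmul ℝ]; norm_num
    rw [hcs]
    exact P.smul_mem _ hx
  have mΓ₂k : ∀ y ∈ Γ₂, ((k : ℕ) : ℝ) • y ∈ Γ' := by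
    rintro y ⟨x, hx, rfl⟩
    exact hkS x hx
  have mΓk' : ∀ x ∈ Γ', ((k' : ℕ) : ℝ) • x ∈ Γ₂ := by
    intro x hx
    refine ⟨((k' : ℕ) : ℝ) • R⁻¹ x, hk'S x hx, ?_⟩
    show R (((k' : ℕ) : ℝ) • R⁻¹ x) = ((k' : ℕ) : ℝ) • x
    rw [map_smul, hRinv1]
  set Λ : Submodule ℤ (Euc d) := Γ' ⊓ Γ₂ with hΛ
  have hcast : Function.Injective fun r : ℤ => r • (1 : ℝ) := by
    intro r s hrs; simpa using hrs
  have hbli : LinearIndependent ℤ ⇑b := b.linearIndependent.restrict_scalars hcast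
  set bΓ : Module.Basis (Fin d) ℤ Γ' := Module.Basis.span hbli with hbΓ
  have hbΓcoe : ∀ i, ((bΓ i : Euc d)) = b i := fun i => congrArg Subtype.val (Module.Basis.span_apply hbli i)
  have det1 : b.det (fun i => ((bΓ i : Euc d))) = 1 := by
    rw [show (fun i => ((bΓ i : Euc d))) = ⇑b from funext hbΓcoe]
    exact b.det_self
  have det1ne : b.det (fun i => ((bΓ i : Euc d))) ≠ 0 := by rw [det1]; norm_num
  set bΓ₂ : Module.Basis (Fin d) ℤ Γ₂ := bΓ.map (eR.submoduleMap Γ') with hbΓ₂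
  have hbΓ₂coe : ∀ i, ((bΓ₂ i : Euc d)) = R (b i) := by
    intro i
    rw [hbΓ₂, Module.Basis.map_apply,
      show (((eR.submoduleMap Γ') (bΓ i) : Euc d)) = eR (bΓ i) from
        LinearEquiv.submoduleMap_apply eR Γ' (bΓ i),
      heRapp, hbΓcoe]
  have detR : |b.det (fun i => ((bΓ₂ i : Euc d)))| = 1 := by
    have hfun : (fun i => ((bΓ₂ i : Euc d)))
        = ⇑(R.toLinearEquiv.toLinearMap) ∘ ⇑b := by
      funext i; rw [hbΓ₂coe]; rfl
    rw [hfun, Module.Basis.det_comp, Module.Basis.det_self, mul_one]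
    set onb := stdOrthonormalBasis ℝ (Euc d) with honb
    have h1 : onb.toBasis.det ⇑(onb.map R) = LinearMap.det (R.toLinearEquiv.toLinearMap)
        * onb.toBasis.det ⇑onb.toBasis := by
      have h2 : ⇑(onb.map R) = ⇑(R.toLinearEquiv.toLinearMap) ∘ ⇑onb.toBasis := by
        funext i
        simp only [OrthonormalBasis.map_apply, Function.comp_apply,
          OrthonormalBasis.coe_toBasis]
        rfl
      rw [h2, Module.Basis.det_comp]
    rw [Module.Basis.det_self, mul_one] at h1
    rcases onb.det_to_matrix_orthonormalBasis_real (onb.map R) with h2 | h2 <;>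
      rw [← h1, h2] <;> norm_num
  have detΓ₂ne : b.det (fun i => ((bΓ₂ i : Euc d))) ≠ 0 := by
    intro h0; rw [h0, abs_zero] at detR; norm_num at detR
  have hbmem : ∀ i, b i ∈ Γ' := fun i => Submodule.subset_span ⟨i, rfl⟩
  have hk'ne : ((k' : ℕ) : ℝ) ≠ 0 := by exact_mod_cast hk'0.ne'
  have hkne : ((k : ℕ) : ℝ) ≠ 0 := by exact_mod_cast hk0.ne'
  obtain ⟨bΛ⟩ : Nonempty (Module.Basis (Fin d) ℤ Λ) := by
    refine DenAux.exists_basis_of_le inf_le_left bΓ (fun i => ((k' : ℕ) : ℝ) • b i) ?_ ?_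
    · intro i
      exact ⟨natsmul Γ' k' (b i) (hbmem i), mΓk' (b i) (hbmem i)⟩
    · have hu := (b.unitsSMul fun _ => Units.mk0 ((k' : ℕ) : ℝ) hk'ne).linearIndependent
      have hfun : ⇑(b.unitsSMul fun _ => Units.mk0 ((k' : ℕ) : ℝ) hk'ne)
          = fun i => ((k' : ℕ) : ℝ) • b i := by
        funext i
        rw [Module.Basis.unitsSMul_apply]
        rfl
      rwa [hfun] at hu
  set Sn : ℕ := Λ.toAddSubgroup.relIndex Γ'.toAddSubgroup with hSn
  have RM1 := DenAux.relindex_mul_det inf_le_left bΓ bΛ b det1ne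
  rw [det1, abs_one, mul_one, ← hSn] at RM1
  have RM2 := DenAux.relindex_mul_det inf_le_right bΓ₂ bΛ b detΓ₂ne
  rw [detR, mul_one] at RM2
  have hS2 : Λ.toAddSubgroup.relIndex Γ₂.toAddSubgroup = Sn := by
    have hcast2 : ((Λ.toAddSubgroup.relIndex Γ₂.toAddSubgroup : ℕ) : ℝ) = ((Sn : ℕ) : ℝ) := by
      rw [RM2, RM1]
    exact_mod_cast hcast2
  -- scaled sublattice index
  have scaled : ∀ (P : Submodule ℤ (Euc d)) (bP : Module.Basis (Fin d) ℤ P) (n : ℕ)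
      (hn : ((n : ℕ) : ℝ) ≠ 0)
      (habs : |b.det (fun i => ((bP i : Euc d)))| = 1),
      ((P.map ((DenAux.scaleE d ((n : ℕ) : ℝ) hn : Euc d ≃ₗ[ℤ] Euc d) :
        Euc d →ₗ[ℤ] Euc d)).toAddSubgroup).relIndex P.toAddSubgroup = n ^ d := by
    intro P bP n hn habs
    set Q := P.map ((DenAux.scaleE d ((n : ℕ) : ℝ) hn : Euc d ≃ₗ[ℤ] Euc d) :
      Euc d →ₗ[ℤ] Euc d) with hQ
    have hQP : Q ≤ P := by
      rintro y ⟨x, hx, rfl⟩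
      exact natsmul P n x hx
    set bQ : Module.Basis (Fin d) ℤ Q :=
      bP.map ((DenAux.scaleE d ((n : ℕ) : ℝ) hn).submoduleMap P) with hbQ
    have hbQcoe : ∀ i, ((bQ i : Euc d)) = ((n : ℕ) : ℝ) • ((bP i : Euc d)) := by
      intro i; rw [hbQ, Module.Basis.map_apply]; exact LinearEquiv.submoduleMap_apply _ _ _
    have hdet : |b.det (fun i => ((bQ i : Euc d)))| = ((n : ℕ) : ℝ) ^ d := by
      rw [show (fun i => ((bQ i : Euc d)))
        = fun i => ((n : ℕ) : ℝ) • ((bP i : Euc d)) from funext hbQcoe]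
      have h2 : (b.det fun i => ((n : ℕ) : ℝ) • ((bP i : Euc d)))
          = (∏ _i : Fin d, ((n : ℕ) : ℝ)) • b.det (fun i => ((bP i : Euc d))) :=
        b.det.toMultilinearMap.map_smul_univ _ _
      rw [h2, Finset.prod_const, smul_eq_mul, abs_mul, abs_pow, habs, mul_one]
      rw [abs_of_nonneg (by positivity : (0:ℝ) ≤ ((n : ℕ) : ℝ))]
      simp
    have habne : b.det (fun i => ((bP i : Euc d))) ≠ 0 := by
      intro h0; rw [h0, abs_zero] at habs; norm_num at habs
    have hRM := DenAux.relindex_mul_det hQP bP bQ b habne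
    rw [habs, mul_one, hdet] at hRM
    have hcast3 : ((Q.toAddSubgroup.relIndex P.toAddSubgroup : ℕ) : ℝ) = ((n ^ d : ℕ) : ℝ) := by
      rw [hRM]; push_cast; ring
    exact_mod_cast hcast3
  have hk'L : ∀ x ∈ Γ', ((k' : ℕ) : ℝ) • x ∈ Λ := fun x hx =>
    ⟨natsmul Γ' k' x hx, mΓk' x hx⟩
  have hkL : ∀ y ∈ Γ₂, ((k : ℕ) : ℝ) • y ∈ Λ := fun y hy =>
    ⟨mΓ₂k y hy, natsmul Γ₂ k y hy⟩
  have hdvd1 : Sn ∣ k' ^ d := by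
    have hr := scaled Γ' bΓ k' hk'ne (by rw [det1]; norm_num)
    have c1 : (Γ'.map ((DenAux.scaleE d ((k' : ℕ) : ℝ) hk'ne : Euc d ≃ₗ[ℤ] Euc d) :
        Euc d →ₗ[ℤ] Euc d)).toAddSubgroup ≤ Λ.toAddSubgroup := by
      rintro y ⟨x, hx, rfl⟩
      exact hk'L x hx
    have c2 : Λ.toAddSubgroup ≤ Γ'.toAddSubgroup := fun x hx => hx.1
    have hch := AddSubgroup.relIndex_mul_relIndex _ _ _ c1 c2
    exact ⟨_, by rw [← hr, ← hch, hSn]; ring⟩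
  have hdvd2 : Sn ∣ k ^ d := by
    have hr := scaled Γ₂ bΓ₂ k hkne detR
    have c1 : (Γ₂.map ((DenAux.scaleE d ((k : ℕ) : ℝ) hkne : Euc d ≃ₗ[ℤ] Euc d) :
        Euc d →ₗ[ℤ] Euc d)).toAddSubgroup ≤ Λ.toAddSubgroup := by
      rintro y ⟨x, hx, rfl⟩
      exact hkL x hx
    have c2 : Λ.toAddSubgroup ≤ Γ₂.toAddSubgroup := fun x hx => hx.2
    have hch := AddSubgroup.relIndex_mul_relIndex _ _ _ c1 c2
    exact ⟨_, by rw [← hr, ← hch, hS2]; ring⟩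
  have hToInf : Γ₂.toAddSubgroup ⊓ Γ'.toAddSubgroup = Λ.toAddSubgroup := by
    ext x
    simp only [AddSubgroup.mem_inf, Submodule.mem_toAddSubgroup, hΛ, Submodule.mem_inf]
    exact and_comm
  have hToInf2 : Γ'.toAddSubgroup ⊓ Γ₂.toAddSubgroup = Λ.toAddSubgroup := by
    rw [inf_comm]; exact hToInf
  have hcoin : coinIndex Γ R = Sn := by
    show (rotMap R Γ).relIndex Γ = Sn
    rw [hrot, hb, ← AddSubgroup.inf_relIndex_right, hToInf, hSn]
  have hSpos : 0 < Sn := by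
    rcases Nat.eq_zero_or_pos Sn with h0 | h0
    · exfalso
      rw [h0] at hdvd1
      exact pow_ne_zero d hk'0.ne' (Nat.eq_zero_of_zero_dvd hdvd1)
    · exact h0
  have hsm1 : ∀ x ∈ Γ', Sn • x ∈ Λ := by
    intro x hx
    haveI hfi : (Λ.toAddSubgroup.addSubgroupOf Γ'.toAddSubgroup).FiniteIndex :=
      ⟨hSpos.ne'⟩
    have h1 := AddSubgroup.nsmul_index_mem (Λ.toAddSubgroup.addSubgroupOf Γ'.toAddSubgroup)
      (⟨x, hx⟩ : Γ'.toAddSubgroup)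
    have hidx : (Λ.toAddSubgroup.addSubgroupOf Γ'.toAddSubgroup).index = Sn := hSn.symm
    rw [hidx, AddSubgroup.mem_addSubgroupOf] at h1
    simpa using h1
  have hsm2 : ∀ y ∈ Γ₂, Sn • y ∈ Λ := by
    intro y hy
    haveI hfi : (Λ.toAddSubgroup.addSubgroupOf Γ₂.toAddSubgroup).FiniteIndex :=
      ⟨by
        have hne := hSpos.ne'
        rw [← hS2] at hne
        exact hne⟩
    have h1 := AddSubgroup.nsmul_index_mem (Λ.toAddSubgroup.addSubgroupOf Γ₂.toAddSubgroup)
      (⟨y, hy⟩ : Γ₂.toAddSubgroup)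
    have hidx : (Λ.toAddSubgroup.addSubgroupOf Γ₂.toAddSubgroup).index = Sn := hS2
    rw [hidx, AddSubgroup.mem_addSubgroupOf] at h1
    simpa using h1
  have hscalinv : ((Sn : ℕ) : ℝ) ∈ Scal Γ R⁻¹ := by
    rw [DenAux.mem_scal_iff]
    intro x hxΓ
    have hx : x ∈ Γ' := (hmem x).mp hxΓ
    obtain ⟨y, hy, hyx⟩ := (hsm1 x hx).2
    rw [hmem]
    have h2 : ((Sn : ℕ) : ℝ) • R⁻¹ x = y := by
      have h3 : R y = Sn • x := hyx
      have h4 : R⁻¹ (R y) = R⁻¹ (Sn • x) := congrArg _ h3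
      rw [hRinv2] at h4
      rw [h4, show (Sn • x : Euc d) = ((Sn : ℕ) : ℝ) • x from
        (Nat.cast_smul_eq_nsmul ℝ Sn x).symm, map_smul]
    rw [h2]
    exact hy
  have hdvdk' : k' ∣ Sn := DenAux.den_dvd hδ' hk' hSpos hscalinv
  have hscal : ((Sn : ℕ) : ℝ) ∈ Scal Γ R := by
    rw [DenAux.mem_scal_iff]
    intro x hxΓ
    have hx2 : R x ∈ Γ₂ := ⟨x, (hmem x).mp hxΓ, rfl⟩
    have h1 := (hsm2 (R x) hx2).1
    rw [hmem, show ((Sn : ℕ) : ℝ) • R x = Sn • R x from Nat.cast_smul_eq_nsmul ℝ Sn (R x)]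
    exact h1
  have hdvdk : k ∣ Sn := DenAux.den_dvd hδ hk hSpos hscal
  -- third part
  set L : ℕ := Nat.lcm k k' with hL
  have hLpos : 0 < L := Nat.pos_of_ne_zero (Nat.lcm_ne_zero hk0.ne' hk'0.ne')
  have hLne : ((L : ℕ) : ℝ) ≠ 0 := by exact_mod_cast hLpos.ne'
  have hkdL : k ∣ L := Nat.dvd_lcm_left k k'
  have hk'dL : k' ∣ L := Nat.dvd_lcm_right k k'
  have mLΓ : ∀ x ∈ Γ', ((L : ℕ) : ℝ) • x ∈ Λ := by
    intro x hx
    refine ⟨natsmul Γ' L x hx, ?_⟩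
    have hsp : ((L : ℕ) : ℝ) • x = ((L / k' : ℕ) : ℝ) • (((k' : ℕ) : ℝ) • x) := by
      rw [smul_smul, ← Nat.cast_mul]
      congr 2
      exact (Nat.div_mul_cancel hk'dL).symm
    rw [hsp]
    exact natsmul Γ₂ (L / k') _ (mΓk' x hx)
  have mLΓ₂ : ∀ y ∈ Γ₂, ((L : ℕ) : ℝ) • y ∈ Λ := by
    intro y hy
    refine ⟨?_, natsmul Γ₂ L y hy⟩
    have hsp : ((L : ℕ) : ℝ) • y = ((L / k : ℕ) : ℝ) • (((k : ℕ) : ℝ) • y) := by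
      rw [smul_smul, ← Nat.cast_mul]
      congr 2
      exact (Nat.div_mul_cancel hkdL).symm
    rw [hsp]
    exact natsmul Γ' (L / k) _ (mΓ₂k y hy)
  have hrL := scaled Γ' bΓ L hLne (by rw [det1]; norm_num)
  set QL := Γ'.map ((DenAux.scaleE d ((L : ℕ) : ℝ) hLne : Euc d ≃ₗ[ℤ] Euc d) :
    Euc d →ₗ[ℤ] Euc d) with hQL
  set eLA : Euc d ≃+ Euc d := (DenAux.scaleE d ((L : ℕ) : ℝ) hLne).toAddEquiv with heLA
  set G2 : AddSubgroup (Euc d) :=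
    (Γ'.toAddSubgroup ⊔ Γ₂.toAddSubgroup).map (eLA : Euc d →+ Euc d) with hG2
  have hQLeq : QL.toAddSubgroup = Γ'.toAddSubgroup.map (eLA : Euc d →+ Euc d) := by
    ext x
    simp only [Submodule.mem_toAddSubgroup, hQL, Submodule.mem_map, AddSubgroup.mem_map]
    constructor
    · rintro ⟨y, hy, rfl⟩; exact ⟨y, hy, rfl⟩
    · rintro ⟨y, hy, rfl⟩; exact ⟨y, hy, rfl⟩
  have c1 : QL.toAddSubgroup ≤ G2 := by
    rw [hQLeq, hG2]
    exact AddSubgroup.map_mono le_sup_left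
  have c2 : G2 ≤ Λ.toAddSubgroup := by
    rw [hG2, AddSubgroup.map_sup]
    refine sup_le ?_ ?_
    · rintro z ⟨x, hx, rfl⟩
      exact mLΓ x hx
    · rintro z ⟨y, hy, rfl⟩
      exact mLΓ₂ y hy
  have c3 : Λ.toAddSubgroup ≤ Γ'.toAddSubgroup := fun x hx => hx.1
  have r2 : QL.toAddSubgroup.relIndex G2 = Sn := by
    rw [hQLeq, hG2, DenAux.relindex_map_addequiv, AddSubgroup.relIndex_sup_left,
      ← AddSubgroup.inf_relIndex_right, hToInf2]
    exact hS2
  have hchain1 := AddSubgroup.relIndex_mul_relIndex QL.toAddSubgroup Λ.toAddSubgroup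
    Γ'.toAddSubgroup (le_trans c1 c2) c3
  have hchain2 := AddSubgroup.relIndex_mul_relIndex QL.toAddSubgroup G2
    Λ.toAddSubgroup c1 c2
  rw [hcoin]
  refine ⟨Nat.lcm_dvd hdvdk hdvdk', ?_, ?_⟩
  · have hg := Nat.dvd_gcd hdvd2 hdvd1
    rwa [DenAux.gcd_pow_nat] at hg
  · refine ⟨G2.relIndex Λ.toAddSubgroup, ?_⟩
    rw [← hrL, ← hchain1, ← hchain2, r2, hSn]
    ring
end
end
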